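/- Let λ > 0 and μ > 0 be real numbers with λ ≠ μ and λ ≠ 2μ. Then the function u₀(t,x) = x·t^μ/(μ−λ) + t^{2μ}/((μ−λ)²·(2μ−λ)) satisfies t·∂u₀/∂t = x·t^μ + λ·u₀ + (∂u₀/∂x)² for all t > 0 and x ∈ ℂ. Moreover, in the case λ = 2μ the function u₀(t,x) = x·t^μ/(μ−λ) + t^{2μ}·(log t)/(μ−λ)² and in the case λ = μ the function u₀(t,x) = x·t^μ·(log t) + t^{2μ}·(log t)²/μ − 2·t^{2μ}·(log t)/μ² + 2·t^{2μ}/μ³ satisfy the same equation t·∂u/∂t = x·t^μ + λ·u + (∂u/∂x)² for all t > 0 and x ∈ ℂ. -/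

import Mathlib

open Set Filter Topology Complex

noncomputable section

/-- `u` solves `t ∂u/∂t = x t^μ + λ u + (∂u/∂x)²` for all `t > 0`, `x ∈ ℂ`. -/
def SolvesExample (lam mu : ℝ) (u : ℝ → ℂ → ℂ) : Prop :=
  ∀ t : ℝ, 0 < t → ∀ x : ℂ,
    HasDerivAt (fun s : ℝ => u s x)
      ((x * ((t ^ mu : ℝ) : ℂ) + (lam : ℂ) * u t x + (deriv (u t) x) ^ 2) / (t : ℂ)) t

/-- `u₀` in the case `λ ≠ μ, 2μ`. -/
def uGeneric (lam mu : ℝ) : ℝ → ℂ → ℂ := fun t x =>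
  x * ((t ^ mu : ℝ) : ℂ) / ((mu : ℂ) - (lam : ℂ)) +
    ((t ^ (2 * mu) : ℝ) : ℂ) / (((mu : ℂ) - (lam : ℂ)) ^ 2 * (2 * (mu : ℂ) - (lam : ℂ)))

/-- `u₀` in the case `λ = 2μ`. -/
def uDouble (lam mu : ℝ) : ℝ → ℂ → ℂ := fun t x =>
  x * ((t ^ mu : ℝ) : ℂ) / ((mu : ℂ) - (lam : ℂ)) +
    ((t ^ (2 * mu) : ℝ) : ℂ) * ((Real.log t : ℝ) : ℂ) / ((mu : ℂ) - (lam : ℂ)) ^ 2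

/-- `u₀` in the case `λ = μ`. -/
def uEqual (mu : ℝ) : ℝ → ℂ → ℂ := fun t x =>
  x * ((t ^ mu : ℝ) : ℂ) * ((Real.log t : ℝ) : ℂ) +
    ((t ^ (2 * mu) : ℝ) : ℂ) * ((Real.log t : ℝ) : ℂ) ^ 2 / (mu : ℂ) -
    2 * ((t ^ (2 * mu) : ℝ) : ℂ) * ((Real.log t : ℝ) : ℂ) / ((mu : ℂ)) ^ 2 +
    2 * ((t ^ (2 * mu) : ℝ) : ℂ) / ((mu : ℂ)) ^ 3

lemma aux_rpow_deriv (mu : ℝ) {t : ℝ} (ht : 0 < t) :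
    HasDerivAt (fun s : ℝ => ((s ^ mu : ℝ) : ℂ)) (((mu * t ^ (mu - 1) : ℝ) : ℂ)) t :=
  (Real.hasDerivAt_rpow_const (Or.inl ht.ne')).ofReal_comp

lemma aux_log_deriv {t : ℝ} (ht : 0 < t) :
    HasDerivAt (fun s : ℝ => ((Real.log s : ℝ) : ℂ)) (((t⁻¹ : ℝ) : ℂ)) t :=
  (Real.hasDerivAt_log ht.ne').ofReal_comp

set_option maxHeartbeats 1600000 in
/-- Example 2.5 (1): the explicit particular solutions `u₀` of
`t ∂u/∂t = x t^μ + λ u + (∂u/∂x)²` in the three cases `λ ≠ μ, 2μ`, `λ = 2μ`, `λ = μ`. -/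
theorem statement18 (lam mu : ℝ) (hlam : 0 < lam) (hmu : 0 < mu) :
    (lam ≠ mu → lam ≠ 2 * mu → SolvesExample lam mu (uGeneric lam mu)) ∧
    (lam = 2 * mu → SolvesExample lam mu (uDouble lam mu)) ∧
    (lam = mu → SolvesExample lam mu (uEqual mu)) := by
  have hmu' : (mu : ℂ) ≠ 0 := by exact_mod_cast hmu.ne'
  refine ⟨fun h1 h2 => ?_, fun h2 => ?_, fun h1 => ?_⟩
  · intro t ht x
    have ht' : (t : ℂ) ≠ 0 := by exact_mod_cast ht.ne'
    have hml : (mu : ℂ) - lam ≠ 0 := by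
      rw [sub_ne_zero]; exact_mod_cast h1.symm
    have hml2 : 2 * (mu : ℂ) - lam ≠ 0 := by
      have : (2 * mu : ℝ) ≠ lam := h2.symm
      intro h; apply this
      have : ((2 * mu : ℝ) : ℂ) = (lam : ℂ) := by push_cast; linear_combination h
      exact_mod_cast this
    have e1 : ((t ^ (2 * mu) : ℝ) : ℂ) = ((t ^ mu : ℝ) : ℂ) * ((t ^ mu : ℝ) : ℂ) := by
      rw [two_mul, Real.rpow_add ht]; push_cast; ring
    have e2 : ((t ^ (mu - 1) : ℝ) : ℂ) = ((t ^ mu : ℝ) : ℂ) / t := by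
      rw [Real.rpow_sub ht, Real.rpow_one]; push_cast; ring
    have e3 : ((t ^ (2 * mu - 1) : ℝ) : ℂ)
        = ((t ^ mu : ℝ) : ℂ) * ((t ^ mu : ℝ) : ℂ) / t := by
      rw [Real.rpow_sub ht, Real.rpow_one, ← e1]; push_cast; ring
    have hx : HasDerivAt (uGeneric lam mu t)
        (1 * ((t ^ mu : ℝ) : ℂ) / ((mu : ℂ) - lam)) x := by
      unfold uGeneric
      simpa using
        (((hasDerivAt_id x).mul_const (((t ^ mu : ℝ) : ℂ))).div_const
          ((mu : ℂ) - lam)).add_const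
          (((t ^ (2 * mu) : ℝ) : ℂ) / (((mu : ℂ) - lam) ^ 2 * (2 * (mu : ℂ) - lam)))
    rw [show deriv (uGeneric lam mu t) x = 1 * ((t ^ mu : ℝ) : ℂ) / ((mu : ℂ) - lam)
      from hx.deriv]
    have hD : HasDerivAt (fun s : ℝ => uGeneric lam mu s x)
        (x * ((mu * t ^ (mu - 1) : ℝ) : ℂ) / ((mu : ℂ) - lam) +
          (((2 * mu) * t ^ (2 * mu - 1) : ℝ) : ℂ) /
            (((mu : ℂ) - lam) ^ 2 * (2 * (mu : ℂ) - lam))) t := by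
      exact
        (((aux_rpow_deriv mu ht).const_mul x).div_const ((mu : ℂ) - lam)).add
          ((aux_rpow_deriv (2 * mu) ht).div_const
            (((mu : ℂ) - lam) ^ 2 * (2 * (mu : ℂ) - lam)))
    convert hD using 1
    simp only [uGeneric]
    push_cast
    rw [e1, e2, e3]
    obtain ⟨c, hc⟩ : ∃ c : ℂ, (lam : ℂ) = (mu : ℂ) - c := ⟨(mu : ℂ) - lam, by ring⟩
    have hc0 : c ≠ 0 := by
      intro h; apply hml; rw [hc, h]; ring
    have hd0 : (mu : ℂ) + c ≠ 0 := by
      intro h; apply hml2; rw [hc]; linear_combination h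
    rw [hc]
    simp only [show (mu : ℂ) - ((mu : ℂ) - c) = c from by ring,
      show 2 * (mu : ℂ) - ((mu : ℂ) - c) = (mu : ℂ) + c from by ring]
    have hprod : c ^ 2 * ((mu : ℂ) + c) ≠ 0 := mul_ne_zero (pow_ne_zero 2 hc0) hd0
    rw [div_eq_iff ht', ← sub_eq_zero]
    field_simp
    ring
  · intro t ht x
    have ht' : (t : ℂ) ≠ 0 := by exact_mod_cast ht.ne'
    have hl : (lam : ℂ) = 2 * mu := by exact_mod_cast h2
    have hml : (mu : ℂ) - lam ≠ 0 := by
      rw [hl]; intro h; apply hmu'; linear_combination -h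
    have e1 : ((t ^ (2 * mu) : ℝ) : ℂ) = ((t ^ mu : ℝ) : ℂ) * ((t ^ mu : ℝ) : ℂ) := by
      rw [two_mul, Real.rpow_add ht]; push_cast; ring
    have e2 : ((t ^ (mu - 1) : ℝ) : ℂ) = ((t ^ mu : ℝ) : ℂ) / t := by
      rw [Real.rpow_sub ht, Real.rpow_one]; push_cast; ring
    have e3 : ((t ^ (2 * mu - 1) : ℝ) : ℂ)
        = ((t ^ mu : ℝ) : ℂ) * ((t ^ mu : ℝ) : ℂ) / t := by
      rw [Real.rpow_sub ht, Real.rpow_one, ← e1]; push_cast; ring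
    have hx : HasDerivAt (uDouble lam mu t)
        (1 * ((t ^ mu : ℝ) : ℂ) / ((mu : ℂ) - lam)) x := by
      unfold uDouble
      simpa using
        (((hasDerivAt_id x).mul_const (((t ^ mu : ℝ) : ℂ))).div_const
          ((mu : ℂ) - lam)).add_const
          (((t ^ (2 * mu) : ℝ) : ℂ) * ((Real.log t : ℝ) : ℂ) / ((mu : ℂ) - lam) ^ 2)
    rw [show deriv (uDouble lam mu t) x = 1 * ((t ^ mu : ℝ) : ℂ) / ((mu : ℂ) - lam)
      from hx.deriv]
    have hD : HasDerivAt (fun s : ℝ => uDouble lam mu s x)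
        (x * ((mu * t ^ (mu - 1) : ℝ) : ℂ) / ((mu : ℂ) - lam) +
          ((((2 * mu) * t ^ (2 * mu - 1) : ℝ) : ℂ) * ((Real.log t : ℝ) : ℂ) +
            ((t ^ (2 * mu) : ℝ) : ℂ) * ((t⁻¹ : ℝ) : ℂ)) / ((mu : ℂ) - lam) ^ 2) t := by
      exact
        (((aux_rpow_deriv mu ht).const_mul x).div_const ((mu : ℂ) - lam)).add
          (((aux_rpow_deriv (2 * mu) ht).mul (aux_log_deriv ht)).div_const
            (((mu : ℂ) - lam) ^ 2))
    convert hD using 1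
    simp only [uDouble]
    push_cast
    rw [e1, e2, e3, hl]
    have hml' : (mu : ℂ) - 2 * mu ≠ 0 := by
      intro h; exact hmu' (by linear_combination -h)
    rw [← sub_eq_zero]
    field_simp [hml', ht', hmu']
    ring
  · intro t ht x
    have ht' : (t : ℂ) ≠ 0 := by exact_mod_cast ht.ne'
    have hl : (lam : ℂ) = mu := by exact_mod_cast h1
    have e1 : ((t ^ (2 * mu) : ℝ) : ℂ) = ((t ^ mu : ℝ) : ℂ) * ((t ^ mu : ℝ) : ℂ) := by
      rw [two_mul, Real.rpow_add ht]; push_cast; ring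
    have e2 : ((t ^ (mu - 1) : ℝ) : ℂ) = ((t ^ mu : ℝ) : ℂ) / t := by
      rw [Real.rpow_sub ht, Real.rpow_one]; push_cast; ring
    have e3 : ((t ^ (2 * mu - 1) : ℝ) : ℂ)
        = ((t ^ mu : ℝ) : ℂ) * ((t ^ mu : ℝ) : ℂ) / t := by
      rw [Real.rpow_sub ht, Real.rpow_one, ← e1]; push_cast; ring
    have hx : HasDerivAt (uEqual mu t)
        (1 * ((t ^ mu : ℝ) : ℂ) * ((Real.log t : ℝ) : ℂ)) x := by
      have hx1 := ((hasDerivAt_id x).mul_const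
        (((t ^ mu : ℝ) : ℂ))).mul_const (((Real.log t : ℝ) : ℂ))
      have hx2 := hx1.add_const
        (((t ^ (2 * mu) : ℝ) : ℂ) * ((Real.log t : ℝ) : ℂ) ^ 2 / (mu : ℂ))
      have hx3 := hx2.sub_const
        (2 * ((t ^ (2 * mu) : ℝ) : ℂ) * ((Real.log t : ℝ) : ℂ) / (mu : ℂ) ^ 2)
      have hx4 := hx3.add_const (2 * ((t ^ (2 * mu) : ℝ) : ℂ) / (mu : ℂ) ^ 3)
      unfold uEqual
      simpa using hx4
    rw [show deriv (uEqual mu t) x = 1 * ((t ^ mu : ℝ) : ℂ) * ((Real.log t : ℝ) : ℂ)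
      from hx.deriv]
    have d1 := ((aux_rpow_deriv mu ht).const_mul x).mul (aux_log_deriv ht)
    have d2 := ((aux_rpow_deriv (2 * mu) ht).mul
      ((aux_log_deriv ht).mul (aux_log_deriv ht))).div_const (mu : ℂ)
    have d3 := (((aux_rpow_deriv (2 * mu) ht).const_mul (2 : ℂ)).mul
      (aux_log_deriv ht)).div_const ((mu : ℂ) ^ 2)
    have d4 := ((aux_rpow_deriv (2 * mu) ht).const_mul (2 : ℂ)).div_const ((mu : ℂ) ^ 3)
    have hD := ((d1.add d2).sub d3).add d4
    convert hD using 1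
    · rfl
    · funext s
      simp only [uEqual, Pi.mul_apply, Pi.add_apply, Pi.sub_apply]
      ring
    simp only [uEqual, Pi.mul_apply]
    push_cast
    rw [e1, e2, e3, hl]
    rw [div_eq_iff ht', ← sub_eq_zero]
    field_simp
    ring
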